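/- Define G on the prism P = {(s,t,u) ∈ [0,1]³ : s+t ≤ 1} by G(s,t,u) = (s,t,u) if s+t+u ≤ 1; G(s,t,u) = (s, 1−u, 1−s−t) if s+t+u > 1 and t+u > 1; G(s,t,u) = (1−t−u, t, s+t+u−1) if s+t+u > 1 and t+u ≤ 1. Then G maps P onto the simplex S = {(s,t,u) : s,t,u ≥ 0, s+t+u ≤ 1}, and the pushforward under G of the uniform measure on P is the uniform measure on S. -/

import Mathlib

open MeasureTheory
open scoped ENNReal

lemma mp_shear1 (g : ℝ → ℝ) (hg : Measurable g) :
    MeasurePreserving (fun q : ℝ × ℝ => (q.1, q.2 + g q.1)) volume volume :=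
  MeasurePreserving.skew_product (f := id) (g := fun a c => c + g a)
    (MeasurePreserving.id volume) (by fun_prop)
    (Filter.Eventually.of_forall fun a => map_add_right_eq_self volume (g a))

lemma mp_shear_pair (f : ℝ × ℝ → ℝ) (hf : Measurable f) :
    MeasurePreserving (fun p : ℝ × ℝ × ℝ => (p.1, (p.2.1, p.2.2 + f (p.1, p.2.1))))
      volume volume :=
  MeasurePreserving.skew_product (f := id)
    (g := fun (a : ℝ) (c : ℝ × ℝ) => ((c.1, c.2 + f (a, c.1)) : ℝ × ℝ))
    (MeasurePreserving.id volume) (by fun_prop)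
    (Filter.Eventually.of_forall fun a =>
      (mp_shear1 (fun t => f (a, t)) (by fun_prop)).map_eq)

lemma mp_shear_fst (f : ℝ × ℝ → ℝ) (hf : Measurable f) :
    MeasurePreserving (fun p : ℝ × ℝ × ℝ => (p.1 + f p.2, p.2)) volume volume := by
  have h : MeasurePreserving (fun q : (ℝ × ℝ) × ℝ => (q.1, q.2 + f q.1)) volume volume :=
    MeasurePreserving.skew_product (f := id) (g := fun a c => c + f a)
      (MeasurePreserving.id volume) (by fun_prop)
      (Filter.Eventually.of_forall fun a => map_add_right_eq_self volume (f a))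
  have := ((Measure.measurePreserving_swap (μ := (volume : Measure (ℝ×ℝ))) (ν := (volume : Measure ℝ))).comp h).comp
    (Measure.measurePreserving_swap (μ := (volume : Measure ℝ)) (ν := (volume : Measure (ℝ×ℝ))))
  exact this

lemma mp_one_sub : MeasurePreserving (fun x : ℝ => 1 - x) volume volume :=
  Measure.measurePreserving_sub_left volume 1

noncomputable def T2 : ℝ × ℝ × ℝ → ℝ × ℝ × ℝ := fun p => (p.1, 1 - p.2.2, 1 - p.1 - p.2.1)
noncomputable def T3 : ℝ × ℝ × ℝ → ℝ × ℝ × ℝ :=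
  fun p => (1 - p.2.1 - p.2.2, p.2.1, p.1 + p.2.1 + p.2.2 - 1)

lemma mpT2 : MeasurePreserving T2 volume volume := by
  have hA : MeasurePreserving (Prod.map (id : ℝ → ℝ) (Prod.swap : ℝ × ℝ → ℝ × ℝ))
      volume volume :=
    (MeasurePreserving.id volume).prod (Measure.measurePreserving_swap)
  have hB : MeasurePreserving
      (Prod.map (id : ℝ → ℝ) (Prod.map (fun x : ℝ => 1 - x) (fun x : ℝ => 1 - x)))
      volume volume :=
    (MeasurePreserving.id volume).prod (mp_one_sub.prod mp_one_sub)
  have hC := mp_shear_pair (fun q => -q.1) (by fun_prop)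
  have h := (hC.comp hB).comp hA
  have : T2 = (fun p : ℝ × ℝ × ℝ => (p.1, (p.2.1, p.2.2 + (fun q : ℝ × ℝ => -q.1) (p.1, p.2.1)))) ∘
      (Prod.map (id : ℝ → ℝ) (Prod.map (fun x : ℝ => 1 - x) (fun x : ℝ => 1 - x))) ∘
      (Prod.map (id : ℝ → ℝ) (Prod.swap : ℝ × ℝ → ℝ × ℝ)) := by
    funext p
    simp [T2, Function.comp, Prod.map]
    ring
  rwa [this]

lemma mpT3 : MeasurePreserving T3 volume volume := by
  have ha := mp_shear_pair (fun q => q.2) (by fun_prop)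
  have hb := mp_shear_fst (fun q => q.2 - 1) (by fun_prop)
  have hc1 : MeasurePreserving (Prod.swap : ℝ × (ℝ × ℝ) → (ℝ × ℝ) × ℝ) volume volume :=
    Measure.measurePreserving_swap
  have hc2 : MeasurePreserving (Prod.map (Prod.swap : ℝ × ℝ → ℝ × ℝ) (id : ℝ → ℝ))
      volume volume := (Measure.measurePreserving_swap).prod (MeasurePreserving.id volume)
  have hc3 : MeasurePreserving (MeasurableEquiv.prodAssoc : (ℝ × ℝ) × ℝ ≃ᵐ ℝ × (ℝ × ℝ))
      volume volume := volume_preserving_prodAssoc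
  have hd : MeasurePreserving (Prod.map (fun x : ℝ => 1 - x) (id : ℝ × ℝ → ℝ × ℝ))
      volume volume := mp_one_sub.prod (MeasurePreserving.id volume)
  have h := ((((hd.comp hc3).comp hc2).comp hc1).comp hb).comp ha
  have : T3 = (Prod.map (fun x : ℝ => 1 - x) (id : ℝ × ℝ → ℝ × ℝ)) ∘
      (MeasurableEquiv.prodAssoc : (ℝ × ℝ) × ℝ ≃ᵐ ℝ × (ℝ × ℝ)) ∘
      (Prod.map (Prod.swap : ℝ × ℝ → ℝ × ℝ) (id : ℝ → ℝ)) ∘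
      (Prod.swap : ℝ × (ℝ × ℝ) → (ℝ × ℝ) × ℝ) ∘
      (fun p : ℝ × ℝ × ℝ => (p.1 + (fun q : ℝ × ℝ => q.2 - 1) p.2, p.2)) ∘
      (fun p : ℝ × ℝ × ℝ => (p.1, (p.2.1, p.2.2 + (fun q : ℝ × ℝ => q.2) (p.1, p.2.1)))) := by
    funext p
    simp [T3, Function.comp, Prod.map, MeasurableEquiv.prodAssoc]
    constructor <;> ring
  rwa [this]

lemma null_u (c : ℝ) : volume {p : ℝ × ℝ × ℝ | p.2.2 = c} = 0 := by
  have : {p : ℝ × ℝ × ℝ | p.2.2 = c} = (Set.univ : Set ℝ) ×ˢ ((Set.univ : Set ℝ) ×ˢ ({c} : Set ℝ)) := by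
    ext p
    simp only [Set.mem_setOf_eq, Set.mem_prod, Set.mem_univ, Set.mem_singleton_iff, true_and]
  rw [this, Measure.volume_eq_prod, Measure.prod_prod, Measure.volume_eq_prod, Measure.prod_prod]
  simp

lemma null_plane : volume {p : ℝ × ℝ × ℝ | p.1 + p.2.1 + p.2.2 = 1} = 0 := by
  have hm := mp_shear_pair (fun q => q.1 + q.2) (by fun_prop)
  have hs : MeasurableSet {p : ℝ × ℝ × ℝ | p.2.2 = 1} :=
    (isClosed_eq (by fun_prop) continuous_const).measurableSet
  have hpre : (fun p : ℝ × ℝ × ℝ => (p.1, (p.2.1, p.2.2 + (fun q : ℝ × ℝ => q.1 + q.2) (p.1, p.2.1)))) ⁻¹'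
      {p : ℝ × ℝ × ℝ | p.2.2 = 1} = {p : ℝ × ℝ × ℝ | p.1 + p.2.1 + p.2.2 = 1} := by
    ext p; simp [Set.mem_preimage]; constructor <;> intro h <;> linarith
  rw [← hpre, hm.measure_preimage hs.nullMeasurableSet]
  exact null_u 1

def Sset : Set (ℝ × ℝ × ℝ) :=
  {p | 0 ≤ p.1 ∧ 0 ≤ p.2.1 ∧ 0 ≤ p.2.2 ∧ p.1 + p.2.1 + p.2.2 ≤ 1}
def Qtwo : Set (ℝ × ℝ × ℝ) :=
  {p | 0 ≤ p.1 ∧ 0 ≤ p.2.1 ∧ 0 ≤ p.2.2 ∧ p.1 + p.2.1 + p.2.2 < 1}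
def Qthree : Set (ℝ × ℝ × ℝ) :=
  {p | 0 ≤ p.1 ∧ 0 ≤ p.2.1 ∧ 0 < p.2.2 ∧ p.1 + p.2.1 + p.2.2 ≤ 1}

lemma measSset : MeasurableSet Sset := by
  have : Sset = {p : ℝ×ℝ×ℝ | 0 ≤ p.1} ∩ ({p | 0 ≤ p.2.1} ∩ ({p | 0 ≤ p.2.2} ∩
      {p | p.1 + p.2.1 + p.2.2 ≤ 1})) := by ext p; simp [Sset]
  rw [this]
  exact (measurableSet_le measurable_const (by fun_prop)).inter
    ((measurableSet_le measurable_const (by fun_prop)).inter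
      ((measurableSet_le measurable_const (by fun_prop)).inter
        (measurableSet_le (by fun_prop) measurable_const)))

lemma measQtwo : MeasurableSet Qtwo := by
  have : Qtwo = {p : ℝ×ℝ×ℝ | 0 ≤ p.1} ∩ ({p | 0 ≤ p.2.1} ∩ ({p | 0 ≤ p.2.2} ∩
      {p | p.1 + p.2.1 + p.2.2 < 1})) := by ext p; simp [Qtwo]
  rw [this]
  exact (measurableSet_le measurable_const (by fun_prop)).inter
    ((measurableSet_le measurable_const (by fun_prop)).inter
      ((measurableSet_le measurable_const (by fun_prop)).inter
        (measurableSet_lt (by fun_prop) measurable_const)))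

lemma measQthree : MeasurableSet Qthree := by
  have : Qthree = {p : ℝ×ℝ×ℝ | 0 ≤ p.1} ∩ ({p | 0 ≤ p.2.1} ∩ ({p | 0 < p.2.2} ∩
      {p | p.1 + p.2.1 + p.2.2 ≤ 1})) := by ext p; simp [Qthree]
  rw [this]
  exact (measurableSet_le measurable_const (by fun_prop)).inter
    ((measurableSet_le measurable_const (by fun_prop)).inter
      ((measurableSet_lt measurable_const (by fun_prop)).inter
        (measurableSet_le (by fun_prop) measurable_const)))

lemma aeQ2 : Qtwo =ᵐ[volume] Sset := by
  rw [MeasureTheory.ae_eq_set]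
  constructor
  · have : Qtwo \ Sset = ∅ := Set.diff_eq_empty.2 fun p hp =>
      ⟨hp.1, hp.2.1, hp.2.2.1, le_of_lt hp.2.2.2⟩
    simp [this]
  · refine measure_mono_null ?_ null_plane
    rintro p ⟨hps, hpn⟩
    simp only [Qtwo, Set.mem_setOf_eq, not_and, not_lt] at hpn
    have := hpn hps.1 hps.2.1 hps.2.2.1
    have h4 := hps.2.2.2
    simp only [Set.mem_setOf_eq]
    linarith

lemma aeQ3 : Qthree =ᵐ[volume] Sset := by
  rw [MeasureTheory.ae_eq_set]
  constructor
  · have : Qthree \ Sset = ∅ := Set.diff_eq_empty.2 fun p hp =>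
      ⟨hp.1, hp.2.1, le_of_lt hp.2.2.1, hp.2.2.2⟩
    simp [this]
  · refine measure_mono_null ?_ (null_u 0)
    rintro p ⟨hps, hpn⟩
    simp only [Qthree, Set.mem_setOf_eq, not_and, not_lt] at hpn
    simp only [not_lt, not_le] at hpn
    have h := hpn hps.1 hps.2.1
    simp only [Set.mem_setOf_eq]
    by_contra hne
    have hpos : 0 < p.2.2 := lt_of_le_of_ne hps.2.2.1 (Ne.symm hne)
    have := h hpos
    linarith [hps.2.2.2]

lemma volS_ne_top : volume Sset ≠ ⊤ := by
  have hsub : Sset ⊆ Set.Icc (0 : ℝ×ℝ×ℝ) 1 := by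
    rintro p ⟨h1, h2, h3, h4⟩
    refine ⟨⟨h1, h2, h3⟩, ?_, ?_, ?_⟩ <;>
    · simp only [Prod.fst_one, Prod.snd_one]
      linarith
  refine ne_top_of_le_ne_top ?_ (measure_mono hsub)
  rw [Set.Icc_prod_eq, Set.Icc_prod_eq, Measure.volume_eq_prod, Measure.prod_prod,
    Measure.volume_eq_prod, Measure.prod_prod]
  simp [Real.volume_Icc]

lemma volS_ne_zero : volume Sset ≠ 0 := by
  have hsub : Set.Icc (0 : ℝ×ℝ×ℝ) (1/3, 1/3, 1/3) ⊆ Sset := by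
    rintro p ⟨⟨h1, h2, h3⟩, ⟨h4, h5, h6⟩⟩
    exact ⟨h1, h2, h3, by simp at h4 h5 h6 ⊢; linarith⟩
  intro h0
  have : volume (Set.Icc (0 : ℝ×ℝ×ℝ) (1/3, 1/3, 1/3)) = 0 :=
    le_antisymm (h0 ▸ measure_mono hsub) bot_le
  rw [Set.Icc_prod_eq, Set.Icc_prod_eq, Measure.volume_eq_prod, Measure.prod_prod,
    Measure.volume_eq_prod, Measure.prod_prod] at this
  simp [Real.volume_Icc] at this

/-- The second fold map sends the prism `{s + t ≤ 1}` onto the simplex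
`{s,t,u ≥ 0, s + t + u ≤ 1}`, pushing the uniform measure on the prism forward to
the uniform measure on the simplex. -/
theorem stmt_18 (G : ℝ × ℝ × ℝ → ℝ × ℝ × ℝ)
    (hG : G = fun p =>
      if p.1 + p.2.1 + p.2.2 ≤ 1 then p
      else if 1 < p.2.1 + p.2.2 then (p.1, 1 - p.2.2, 1 - p.1 - p.2.1)
      else (1 - p.2.1 - p.2.2, p.2.1, p.1 + p.2.1 + p.2.2 - 1))
    (P S : Set (ℝ × ℝ × ℝ))
    (hP : P = {p ∈ Set.Icc (0 : ℝ × ℝ × ℝ) 1 | p.1 + p.2.1 ≤ 1})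
    (hS : S = {p : ℝ × ℝ × ℝ |
      0 ≤ p.1 ∧ 0 ≤ p.2.1 ∧ 0 ≤ p.2.2 ∧ p.1 + p.2.1 + p.2.2 ≤ 1}) :
    G '' P = S ∧
    Measure.map G ((volume P)⁻¹ • volume.restrict P) =
      (volume S)⁻¹ • volume.restrict S := by
  have hSset : S = Sset := hS
  have hPmem : ∀ p : ℝ × ℝ × ℝ, p ∈ P ↔
      0 ≤ p.1 ∧ p.1 ≤ 1 ∧ 0 ≤ p.2.1 ∧ p.2.1 ≤ 1 ∧ 0 ≤ p.2.2 ∧ p.2.2 ≤ 1 ∧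
        p.1 + p.2.1 ≤ 1 := by
    intro p
    rw [hP]
    simp only [Set.mem_setOf_eq, Set.mem_Icc, Prod.le_def, Prod.fst_one, Prod.snd_one,
      Prod.fst_zero, Prod.snd_zero]
    tauto
  have measP : MeasurableSet P := by
    rw [hP, show {p : ℝ×ℝ×ℝ | p ∈ Set.Icc (0:ℝ×ℝ×ℝ) 1 ∧ p.1 + p.2.1 ≤ 1} =
      Set.Icc (0:ℝ×ℝ×ℝ) 1 ∩ {p : ℝ×ℝ×ℝ | p.1 + p.2.1 ≤ 1} from rfl]
    exact measurableSet_Icc.inter (measurableSet_le (by fun_prop) measurable_const)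
  set P1 := P ∩ {p : ℝ×ℝ×ℝ | p.1 + p.2.1 + p.2.2 ≤ 1} with hP1def
  set P2 := P ∩ {p : ℝ×ℝ×ℝ | 1 < p.1 + p.2.1 + p.2.2 ∧ 1 < p.2.1 + p.2.2} with hP2def
  set P3 := P ∩ {p : ℝ×ℝ×ℝ | 1 < p.1 + p.2.1 + p.2.2 ∧ p.2.1 + p.2.2 ≤ 1} with hP3def
  have measP1 : MeasurableSet P1 := by
    rw [hP1def]
    exact measP.inter (measurableSet_le (by fun_prop) measurable_const)
  have measP2 : MeasurableSet P2 := by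
    rw [hP2def, Set.setOf_and]
    exact measP.inter ((measurableSet_lt measurable_const (by fun_prop)).inter
      (measurableSet_lt measurable_const (by fun_prop)))
  have measP3 : MeasurableSet P3 := by
    rw [hP3def, Set.setOf_and]
    exact measP.inter ((measurableSet_lt measurable_const (by fun_prop)).inter
      (measurableSet_le (by fun_prop) measurable_const))
  have hsplit : P = P1 ∪ P2 ∪ P3 := by
    ext p
    simp only [hP1def, hP2def, hP3def, Set.mem_union, Set.mem_inter_iff, Set.mem_setOf_eq]
    constructor
    · intro hm
      rcases le_or_gt (p.1 + p.2.1 + p.2.2) 1 with h1 | h1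
      · exact Or.inl (Or.inl ⟨hm, h1⟩)
      rcases lt_or_ge 1 (p.2.1 + p.2.2) with h2 | h2
      · exact Or.inl (Or.inr ⟨hm, h1, h2⟩)
      · exact Or.inr ⟨hm, h1, h2⟩
    · rintro ((⟨h, -⟩ | ⟨h, -⟩) | ⟨h, -⟩) <;> exact h
  have hG1 : Set.EqOn G id P1 := by
    intro p hp
    simp only [hG]
    rw [if_pos (show p.1 + p.2.1 + p.2.2 ≤ 1 from hp.2)]
    rfl
  have hG2 : Set.EqOn G T2 P2 := by
    intro p hp
    simp only [hG]
    rw [if_neg (not_le.2 (show 1 < p.1 + p.2.1 + p.2.2 from hp.2.1)),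
      if_pos (show 1 < p.2.1 + p.2.2 from hp.2.2)]
    rfl
  have hG3 : Set.EqOn G T3 P3 := by
    intro p hp
    simp only [hG]
    rw [if_neg (not_le.2 (show 1 < p.1 + p.2.1 + p.2.2 from hp.2.1)),
      if_neg (not_lt.2 (show p.2.1 + p.2.2 ≤ 1 from hp.2.2))]
    rfl
  have hP1S : P1 = Sset := by
    ext p
    simp only [hP1def, Set.mem_inter_iff, Set.mem_setOf_eq, hPmem, Sset]
    constructor
    · rintro ⟨⟨a1, a2, a3, a4, a5, a6, a7⟩, h⟩
      exact ⟨a1, a3, a5, h⟩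
    · rintro ⟨a1, a2, a3, a4⟩
      refine ⟨⟨a1, by linarith, a2, by linarith, a3, by linarith, by linarith⟩, a4⟩
  have hQ2 : T2 ⁻¹' Qtwo = P2 := by
    ext p
    simp only [Set.mem_preimage, T2, Qtwo, Set.mem_setOf_eq, hP2def, Set.mem_inter_iff, hPmem]
    constructor
    · rintro ⟨h1, h2, h3, h4⟩
      refine ⟨⟨h1, by linarith, by linarith, by linarith, by linarith, by linarith,
        by linarith⟩, by linarith, by linarith⟩
    · rintro ⟨⟨a1, a2, a3, a4, a5, a6, a7⟩, b1, b2⟩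
      refine ⟨a1, by linarith, by linarith, by linarith⟩
  have hQ3 : T3 ⁻¹' Qthree = P3 := by
    ext p
    simp only [Set.mem_preimage, T3, Qthree, Set.mem_setOf_eq, hP3def, Set.mem_inter_iff, hPmem]
    constructor
    · rintro ⟨h1, h2, h3, h4⟩
      refine ⟨⟨by linarith, by linarith, h2, by linarith, by linarith, by linarith,
        by linarith⟩, by linarith, by linarith⟩
    · rintro ⟨⟨a1, a2, a3, a4, a5, a6, a7⟩, b1, b2⟩
      refine ⟨by linarith, a3, by linarith, by linarith⟩
  have mG : Measurable G := by
    rw [hG]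
    exact Measurable.ite (measurableSet_le (by fun_prop) measurable_const) measurable_id
      (Measurable.ite (measurableSet_lt measurable_const (by fun_prop)) (by fun_prop)
        (by fun_prop))
  have disj12 : Disjoint P1 P2 := by
    rw [Set.disjoint_left]
    rintro p ⟨_, h1⟩ ⟨_, h2, _⟩
    simp only [Set.mem_setOf_eq] at h1
    linarith
  have disj13 : Disjoint P1 P3 := by
    rw [Set.disjoint_left]
    rintro p ⟨_, h1⟩ ⟨_, h2, _⟩
    simp only [Set.mem_setOf_eq] at h1
    linarith
  have disj23 : Disjoint P2 P3 := by
    rw [Set.disjoint_left]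
    rintro p ⟨-, -, h1⟩ ⟨-, -, h2⟩
    exact absurd (show p.2.1 + p.2.2 ≤ 1 from h2) (not_le.2 (show 1 < p.2.1 + p.2.2 from h1))
  -- image statement
  have himage : G '' P = S := by
    rw [hSset]
    apply Set.Subset.antisymm
    · rintro q ⟨p, hp, rfl⟩
      rw [hsplit] at hp
      rcases hp with (hp | hp) | hp
      · rw [hG1 hp]
        exact hP1S ▸ hp
      · rw [hG2 hp]
        obtain ⟨hpP, b1, b2⟩ := hp
        obtain ⟨a1, a2, a3, a4, a5, a6, a7⟩ := (hPmem p).1 hpP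
        simp only [T2, Sset, Set.mem_setOf_eq]
        refine ⟨by linarith, by linarith, by linarith, by linarith⟩
      · rw [hG3 hp]
        obtain ⟨hpP, b1, b2⟩ := hp
        obtain ⟨a1, a2, a3, a4, a5, a6, a7⟩ := (hPmem p).1 hpP
        simp only [T3, Sset, Set.mem_setOf_eq]
        refine ⟨by linarith, by linarith, by linarith, by linarith⟩
    · intro q hq
      have hq1 : q ∈ P1 := hP1S.symm ▸ hq
      exact ⟨q, hsplit ▸ Set.mem_union_left _ (Set.mem_union_left _ hq1), hG1 hq1⟩
  refine ⟨himage, ?_⟩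
  -- measure statement
  have key1 : Measure.map G (volume.restrict P1) = volume.restrict Sset := by
    have : Measure.map G (volume.restrict P1) = Measure.map id (volume.restrict P1) :=
      Measure.map_congr (Filter.eventuallyEq_of_mem (self_mem_ae_restrict measP1) hG1)
    rw [this, Measure.map_id, hP1S]
  have key2 : Measure.map G (volume.restrict P2) = volume.restrict Qtwo := by
    have h : Measure.map G (volume.restrict P2) = Measure.map T2 (volume.restrict P2) :=
      Measure.map_congr (Filter.eventuallyEq_of_mem (self_mem_ae_restrict measP2) hG2)
    rw [h, ← hQ2, ← Measure.restrict_map mpT2.measurable measQtwo, mpT2.map_eq]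
  have key3 : Measure.map G (volume.restrict P3) = volume.restrict Qthree := by
    have h : Measure.map G (volume.restrict P3) = Measure.map T3 (volume.restrict P3) :=
      Measure.map_congr (Filter.eventuallyEq_of_mem (self_mem_ae_restrict measP3) hG3)
    rw [h, ← hQ3, ← Measure.restrict_map mpT3.measurable measQthree, mpT3.map_eq]
  have hres : volume.restrict P = volume.restrict P1 + volume.restrict P2 +
      volume.restrict P3 := by
    rw [hsplit, Measure.restrict_union (disj13.union_left disj23) measP3,
      Measure.restrict_union disj12 measP2]
  have vP1 : volume P1 = volume Sset := by rw [hP1S]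
  have vP2 : volume P2 = volume Sset := by
    rw [← hQ2, mpT2.measure_preimage measQtwo.nullMeasurableSet, measure_congr aeQ2]
  have vP3 : volume P3 = volume Sset := by
    rw [← hQ3, mpT3.measure_preimage measQthree.nullMeasurableSet, measure_congr aeQ3]
  have vP : volume P = 3 * volume Sset := by
    rw [hsplit, measure_union (disj13.union_left disj23) measP3, measure_union disj12 measP2,
      vP1, vP2, vP3]
    ring
  rw [Measure.map_smul, hres, Measure.map_add _ _ mG, Measure.map_add _ _ mG,
    key1, key2, key3, Measure.restrict_congr_set aeQ2, Measure.restrict_congr_set aeQ3,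
    vP, hSset]
  have h3 : volume.restrict Sset + volume.restrict Sset + volume.restrict Sset =
      (3 : ENNReal) • volume.restrict Sset := by
    rw [show (3 : ENNReal) = 1 + 1 + 1 by norm_num, add_smul, add_smul, one_smul]
  rw [h3, smul_smul]
  congr 1
  rw [ENNReal.mul_inv (Or.inl (by norm_num)) (Or.inl (by norm_num)), mul_comm,
    ← mul_assoc, mul_comm (3 : ENNReal), mul_assoc]
  rw [← mul_assoc, ENNReal.inv_mul_cancel (by norm_num) (by norm_num), one_mul]
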